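/- Let c ≥ 1, N = 2^c, h > 0. Let W : {0,…,N+1} × {0,…,N+1} → ℝ be a grid function (interior values and boundary values) and f : {1,…,N} × {1,…,N} → ℝ. Define w ∈ ℝ^{N²} by w_{(j−1)N+i} = W_{i,j}, define F ∈ ℝ^{N²} by F_{(j−1)N+i} = f_{i,j}, and define the boundary vector b ∈ ℝ^{N²} by b_{(j−1)N+i} = [i=1]·W_{0,j} + [i=N]·W_{N+1,j} + [j=1]·W_{i,0} + [j=N]·W_{i,N+1} (Iverson brackets). Let A = Δ_DD ⊗ I_N + I_N ⊗ Δ_DD, where Δ_DD = D^{(c)}_{−2,1,1}. Then the five-point finite-difference equations (1/h²)(W_{i+1,j} + W_{i−1,j} + W_{i,j+1} + W_{i,j−1} − 4W_{i,j}) = f_{i,j} hold for all interior indices 1 ≤ i, j ≤ N if and only if A w = h² F − b. -/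

import Mathlib

open Matrix Kronecker

noncomputable section

def triD (c : ℕ) (α β γ : ℝ) : Matrix (Fin (2 ^ c)) (Fin (2 ^ c)) ℝ :=
  Matrix.of fun i j =>
    if (i : ℕ) = (j : ℕ) then α
    else if (j : ℕ) = (i : ℕ) + 1 then β
    else if (i : ℕ) = (j : ℕ) + 1 then γ
    else 0

lemma triD_sum (c : ℕ) (V : ℕ → ℝ) (j : Fin (2 ^ c)) :
    ∑ j' : Fin (2 ^ c), triD c (-2) 1 1 j j' * V ((j' : ℕ) + 1)
      = -2 * V ((j : ℕ) + 1)
        + (if (j : ℕ) + 1 < 2 ^ c then V ((j : ℕ) + 2) else 0)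
        + (if 0 < (j : ℕ) then V (j : ℕ) else 0) := by
  have key : ∀ j' : Fin (2 ^ c), triD c (-2) 1 1 j j' * V ((j' : ℕ) + 1)
      = (if j' = j then -2 * V ((j : ℕ) + 1) else 0)
        + (if (j' : ℕ) = (j : ℕ) + 1 then V ((j : ℕ) + 2) else 0)
        + (if (j : ℕ) = (j' : ℕ) + 1 then V (j : ℕ) else 0) := by
    intro j'
    by_cases e1 : (j' : ℕ) = (j : ℕ)
    · have : j' = j := Fin.ext e1
      subst this
      simp [triD]
    · have hne : j' ≠ j := fun hh => e1 (by rw [hh])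
      by_cases e2 : (j' : ℕ) = (j : ℕ) + 1
      · have hj2 : (j' : ℕ) + 1 = (j : ℕ) + 2 := by omega
        simp only [triD, Matrix.of_apply]
        rw [if_neg (by omega), if_pos e2, if_neg hne, if_pos e2,
          if_neg (by omega : ¬(j : ℕ) = (j' : ℕ) + 1), one_mul, hj2]
        ring
      · by_cases e3 : (j : ℕ) = (j' : ℕ) + 1
        · have hj1 : (j' : ℕ) + 1 = (j : ℕ) := by omega
          simp only [triD, Matrix.of_apply]
          rw [if_neg (by omega), if_neg e2, if_pos e3, if_neg hne,
            if_neg e2, if_pos e3, one_mul, hj1]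
          ring
        · simp only [triD, Matrix.of_apply]
          rw [if_neg (by omega), if_neg e2, if_neg e3, if_neg hne,
            if_neg e2, if_neg e3, zero_mul]
          ring
  rw [Finset.sum_congr rfl (fun j' _ => key j')]
  rw [Finset.sum_add_distrib, Finset.sum_add_distrib]
  congr 1
  · congr 1
    · simp
    · by_cases hlt : (j : ℕ) + 1 < 2 ^ c
      · rw [if_pos hlt, Finset.sum_eq_single (⟨(j : ℕ) + 1, hlt⟩ : Fin (2 ^ c))]
        · simp
        · intro b _ hb
          rw [if_neg]
          intro hbv; exact hb (Fin.ext hbv)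
        · simp
      · rw [if_neg hlt]
        apply Finset.sum_eq_zero
        intro b _
        rw [if_neg]
        have := b.isLt; omega
  · by_cases hpos : 0 < (j : ℕ)
    · rw [if_pos hpos,
        Finset.sum_eq_single (⟨(j : ℕ) - 1, by have := j.isLt; omega⟩ : Fin (2 ^ c))]
      · rw [if_pos (by simp; omega)]
      · intro b _ hb
        rw [if_neg]
        intro hbv; apply hb; apply Fin.ext; simp; omega
      · simp
    · rw [if_neg hpos]
      apply Finset.sum_eq_zero
      intro b _
      rw [if_neg]; omega

theorem five_point_fd_iff_linear_system (c : ℕ) (hc : 1 ≤ c) (h : ℝ)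
    (hh : 0 < h) (W : ℕ → ℕ → ℝ) (f : ℕ → ℕ → ℝ) :
    (∀ i j : Fin (2 ^ c),
        (1 / h ^ 2) *
            (W ((i : ℕ) + 2) ((j : ℕ) + 1) + W (i : ℕ) ((j : ℕ) + 1)
              + W ((i : ℕ) + 1) ((j : ℕ) + 2) + W ((i : ℕ) + 1) (j : ℕ)
              - 4 * W ((i : ℕ) + 1) ((j : ℕ) + 1))
          = f ((i : ℕ) + 1) ((j : ℕ) + 1))
    ↔ (Matrix.reindex finProdFinEquiv finProdFinEquiv
          (triD c (-2) 1 1 ⊗ₖ (1 : Matrix (Fin (2 ^ c)) (Fin (2 ^ c)) ℝ)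
            + (1 : Matrix (Fin (2 ^ c)) (Fin (2 ^ c)) ℝ) ⊗ₖ triD c (-2) 1 1)).mulVec
          (fun p : Fin (2 ^ c * 2 ^ c) =>
            W ((p : ℕ) % 2 ^ c + 1) ((p : ℕ) / 2 ^ c + 1))
        = fun p : Fin (2 ^ c * 2 ^ c) =>
            h ^ 2 * f ((p : ℕ) % 2 ^ c + 1) ((p : ℕ) / 2 ^ c + 1)
            - ((if (p : ℕ) % 2 ^ c = 0 then W 0 ((p : ℕ) / 2 ^ c + 1) else 0)
              + (if (p : ℕ) % 2 ^ c = 2 ^ c - 1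
                  then W (2 ^ c + 1) ((p : ℕ) / 2 ^ c + 1) else 0)
              + (if (p : ℕ) / 2 ^ c = 0 then W ((p : ℕ) % 2 ^ c + 1) 0 else 0)
              + (if (p : ℕ) / 2 ^ c = 2 ^ c - 1
                  then W ((p : ℕ) % 2 ^ c + 1) (2 ^ c + 1) else 0)) := by
  set N := 2 ^ c with hN
  have hN1 : 1 < N := by
    have : 2 ^ 1 ≤ 2 ^ c := Nat.pow_le_pow_right (by norm_num) hc
    exact lt_of_lt_of_le (by norm_num) this
  have hNpos : 0 < N := by omega
  have hh2 : h ^ 2 ≠ 0 := pow_ne_zero 2 hh.ne'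
  have hmod : ∀ j i : Fin N, ((finProdFinEquiv (j, i) : Fin (N * N)) : ℕ) % N = (i : ℕ) := by
    intro j i
    simp [finProdFinEquiv, Nat.add_mul_mod_self_left, Nat.mod_eq_of_lt i.isLt]
  have hdiv : ∀ j i : Fin N, ((finProdFinEquiv (j, i) : Fin (N * N)) : ℕ) / N = (j : ℕ) := by
    intro j i
    simp [finProdFinEquiv, Nat.add_mul_div_left _ _ hNpos, Nat.div_eq_of_lt i.isLt]
  -- the mulVec value at finProdFinEquiv (j, i)
  have hmv : ∀ j i : Fin N,
      (Matrix.reindex finProdFinEquiv finProdFinEquiv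
          (triD c (-2) 1 1 ⊗ₖ (1 : Matrix (Fin N) (Fin N) ℝ)
            + (1 : Matrix (Fin N) (Fin N) ℝ) ⊗ₖ triD c (-2) 1 1)).mulVec
          (fun p : Fin (N * N) => W ((p : ℕ) % N + 1) ((p : ℕ) / N + 1))
          (finProdFinEquiv (j, i))
        = (∑ j' : Fin N, triD c (-2) 1 1 j j' * W ((i : ℕ) + 1) ((j' : ℕ) + 1))
          + (∑ i' : Fin N, triD c (-2) 1 1 i i' * W ((i' : ℕ) + 1) ((j : ℕ) + 1)) := by
    intro j i
    rw [Matrix.mulVec, dotProduct,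
      ← Equiv.sum_comp (finProdFinEquiv (m := N) (n := N))]
    simp only [Matrix.reindex_apply, Matrix.submatrix_apply, Equiv.symm_apply_apply,
      Matrix.add_apply, Matrix.kroneckerMap_apply, Matrix.one_apply, hmod, hdiv]
    rw [Fintype.sum_prod_type]
    have this1 : ∀ x : Fin N,
        ∑ y : Fin N,
          ((triD c (-2) 1 1 j x * (if i = y then 1 else 0)
            + (if j = x then 1 else 0) * triD c (-2) 1 1 i y)
              * W ((y : ℕ) + 1) ((x : ℕ) + 1))
        = triD c (-2) 1 1 j x * W ((i : ℕ) + 1) ((x : ℕ) + 1)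
          + (if j = x then ∑ y : Fin N,
              triD c (-2) 1 1 i y * W ((y : ℕ) + 1) ((x : ℕ) + 1) else 0) := by
      intro x
      rw [Finset.sum_congr rfl (fun y _ => add_mul _ _ _), Finset.sum_add_distrib]
      congr 1
      · rw [Finset.sum_congr rfl (fun y _ => by
          rw [mul_ite, mul_one, mul_zero, ite_mul, zero_mul])]
        simp
      · by_cases hj : j = x
        · simp only [if_pos hj, one_mul]
        · simp [hj]
    refine Eq.trans (Finset.sum_congr rfl fun x _ => this1 x) ?_
    rw [Finset.sum_add_distrib]
    congr 1
    simp
  -- reduce to a pointwise statement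
  have hforall : ∀ P : Fin (N * N) → Prop,
      (∀ p, P p) ↔ ∀ j i : Fin N, P (finProdFinEquiv (j, i)) := by
    intro P
    constructor
    · intro H j i; exact H _
    · intro H p
      have := H (finProdFinEquiv.symm p).1 (finProdFinEquiv.symm p).2
      rwa [Prod.mk.eta, Equiv.apply_symm_apply] at this
  rw [funext_iff, hforall]
  -- algebraic core
  have key : ∀ S T B F : ℝ, T + B = S → ((1 / h ^ 2) * S = F ↔ T = h ^ 2 * F - B) := by
    intro S T B F hS
    rw [one_div, inv_mul_eq_div, div_eq_iff hh2]
    constructor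
    · intro hx
      have hc' : F * h ^ 2 = h ^ 2 * F := mul_comm _ _
      linarith
    · intro hx
      have hc' : F * h ^ 2 = h ^ 2 * F := mul_comm _ _
      linarith
  have Hx : ∀ (i : Fin N) (Y : ℕ → ℝ),
      ((if (i : ℕ) + 1 < N then Y ((i : ℕ) + 2) else 0)
        + (if (i : ℕ) = N - 1 then Y (N + 1) else 0) = Y ((i : ℕ) + 2))
      ∧ ((if 0 < (i : ℕ) then Y (i : ℕ) else 0)
        + (if (i : ℕ) = 0 then Y 0 else 0) = Y (i : ℕ)) := by
    intro i Y
    have hi := i.isLt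
    constructor
    · by_cases h1 : (i : ℕ) + 1 < N
      · rw [if_pos h1, if_neg (by omega), add_zero]
      · have e2 : (i : ℕ) + 2 = N + 1 := by omega
        rw [if_neg h1, if_pos (by omega), e2, zero_add]
    · by_cases h2 : 0 < (i : ℕ)
      · rw [if_pos h2, if_neg (by omega), add_zero]
      · have e : (i : ℕ) = 0 := by omega
        rw [if_neg h2, if_pos e, e, zero_add]
  constructor
  · intro H j i
    rw [hmv j i, triD_sum c (fun k => W ((i : ℕ) + 1) k) j,
      triD_sum c (fun k => W k ((j : ℕ) + 1)) i]
    simp only [← hN, hmod, hdiv]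
    refine (key _ _ _ _ ?_).1 (H i j)
    have h1 := (Hx i (fun k => W k ((j : ℕ) + 1))).1
    have h2 := (Hx i (fun k => W k ((j : ℕ) + 1))).2
    have h3 := (Hx j (fun k => W ((i : ℕ) + 1) k)).1
    have h4 := (Hx j (fun k => W ((i : ℕ) + 1) k)).2
    beta_reduce at h1 h2 h3 h4
    linarith
  · intro H i j
    have Hji := H j i
    rw [hmv j i, triD_sum c (fun k => W ((i : ℕ) + 1) k) j,
      triD_sum c (fun k => W k ((j : ℕ) + 1)) i] at Hji
    simp only [← hN, hmod, hdiv] at Hji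
    refine (key _ _ _ _ ?_).2 Hji
    have h1 := (Hx i (fun k => W k ((j : ℕ) + 1))).1
    have h2 := (Hx i (fun k => W k ((j : ℕ) + 1))).2
    have h3 := (Hx j (fun k => W ((i : ℕ) + 1) k)).1
    have h4 := (Hx j (fun k => W ((i : ℕ) + 1) k)).2
    beta_reduce at h1 h2 h3 h4
    linarith
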